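/- Let L be a commutative ring, n ≥ 1, and F a one-dimensional commutative formal group law over L. Consider the power series ring L[[t_1,...,t_{n+1}]] and the ideal J generated by the product t_1⋯t_{n+1} together with the elements t_i −_F t_{n+1} for 1 ≤ i ≤ n (formal differences with respect to F). Then the quotient L[[t_1,...,t_{n+1}]]/J is isomorphic as an L-algebra to L[t]/(t^{n+1}). -/

import Mathlib

noncomputable section

variable {L : Type} [CommRing L] {σ : Type}

/-- Substitution `F(f, g)` of two power series with zero constant term into a
two-variable power series `F`.  The coefficient of a monomial `m` only receives
contributions from terms of `F` of total degree at most the degree of `m`, which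
makes the following finite sum the correct substitution whenever `f` and `g`
have zero constant term. -/
def subst2 (F : MvPowerSeries (Fin 2) L) (f g : MvPowerSeries σ L) :
    MvPowerSeries σ L :=
  fun m =>
    ∑ i ∈ Finset.range ((m.sum fun _ e => e) + 1),
      ∑ j ∈ Finset.range ((m.sum fun _ e => e) + 1),
        (MvPowerSeries.coeff (Finsupp.single 0 i + Finsupp.single 1 j) F) *
          MvPowerSeries.coeff m (f ^ i * g ^ j)

/-- Substitution `ρ(f)` of a power series with zero constant term into a
one-variable power series `ρ`. -/
def subst1 (ρ : PowerSeries L) (f : MvPowerSeries σ L) : MvPowerSeries σ L :=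
  fun m =>
    ∑ i ∈ Finset.range ((m.sum fun _ e => e) + 1),
      (PowerSeries.coeff i ρ) * MvPowerSeries.coeff m (f ^ i)

/-- A one-dimensional commutative formal group law over `L`:
a power series `F(u,v) ∈ L[[u,v]]` with `F(u,0) = u`, `F(0,v) = v`,
`F(u,v) = F(v,u)` and `F(u, F(v,w)) = F(F(u,v), w)`. -/
structure IsFormalGroupLaw (F : MvPowerSeries (Fin 2) L) : Prop where
  zero_right : subst2 F (PowerSeries.X : PowerSeries L) 0 = PowerSeries.X
  zero_left : subst2 F 0 (PowerSeries.X : PowerSeries L) = PowerSeries.X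
  comm : subst2 F (MvPowerSeries.X (1 : Fin 2)) (MvPowerSeries.X (0 : Fin 2)) = F
  assoc : subst2 F (MvPowerSeries.X (0 : Fin 3))
      (subst2 F (MvPowerSeries.X (1 : Fin 3)) (MvPowerSeries.X (2 : Fin 3))) =
    subst2 F (subst2 F (MvPowerSeries.X (0 : Fin 3)) (MvPowerSeries.X (1 : Fin 3)))
      (MvPowerSeries.X (2 : Fin 3))

end

noncomputable section Aux

open MvPowerSeries

variable {L : Type} [CommRing L] {σ : Type}

/-- degree function on monomials -/
def deg (m : σ →₀ ℕ) : ℕ := m.sum fun _ e => e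

lemma deg_add (m u : σ →₀ ℕ) : deg (m + u) = deg m + deg u :=
  Finsupp.sum_add_index' (fun _ => rfl) (fun _ _ _ => rfl)

lemma le_deg (m : σ →₀ ℕ) (s : σ) : m s ≤ deg m := by
  by_cases h : m s = 0
  · simp [h]
  · exact Finset.single_le_sum (fun _ _ => Nat.zero_le _) (Finsupp.mem_support_iff.2 h)

lemma deg_eq_zero {m : σ →₀ ℕ} (h : deg m = 0) : m = 0 := by
  ext s
  simp only [Finsupp.coe_zero, Pi.zero_apply]
  have := le_deg m s
  omega

lemma deg_single (s : σ) (k : ℕ) : deg (Finsupp.single s k) = k := by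
  simp [deg]

/-- `MOrd k f` : the order of `f` is at least `k`. -/
def MOrd (k : ℕ) (f : MvPowerSeries σ L) : Prop :=
  ∀ m : σ →₀ ℕ, deg m < k → MvPowerSeries.coeff m f = 0

lemma mord_zero (f : MvPowerSeries σ L) : MOrd 0 f := fun _ h => absurd h (Nat.not_lt_zero _)

lemma mord_one_iff {f : MvPowerSeries σ L} :
    MOrd 1 f ↔ MvPowerSeries.constantCoeff f = 0 := by
  constructor
  · intro h
    rw [← MvPowerSeries.coeff_zero_eq_constantCoeff_apply]
    exact h 0 (by simp [deg])
  · intro h m hm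
    have : m = 0 := deg_eq_zero (by omega)
    rw [this, MvPowerSeries.coeff_zero_eq_constantCoeff_apply, h]

lemma mord_mul {j k : ℕ} {f g : MvPowerSeries σ L} (hf : MOrd j f) (hg : MOrd k g) :
    MOrd (j + k) (f * g) := by
  classical
  intro m hm
  rw [MvPowerSeries.coeff_mul]
  apply Finset.sum_eq_zero
  rintro ⟨u, w⟩ huw
  rw [Finset.HasAntidiagonal.mem_antidiagonal] at huw
  by_cases h : deg u < j
  · rw [hf u h, zero_mul]
  · rw [hg w ?_, mul_zero]
    have : deg (u + w) = deg u + deg w := deg_add u w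
    rw [huw] at this
    omega

lemma mord_pow {f : MvPowerSeries σ L} (hf : MOrd 1 f) (p : ℕ) : MOrd p (f ^ p) := by
  induction p with
  | zero => exact mord_zero _
  | succ p ih =>
    rw [pow_succ]
    exact mord_mul ih hf

lemma coeff_pow_mul_eq_zero {f g : MvPowerSeries σ L}
    (hf : MvPowerSeries.constantCoeff f = 0) {p : ℕ} {m : σ →₀ ℕ} (h : deg m < p) :
    MvPowerSeries.coeff m (f ^ p * g) = 0 := by
  have := mord_mul (mord_pow (mord_one_iff.2 hf) p) (mord_zero g)
  exact this m (by omega)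

lemma coeff_pow_pow_eq_zero {f g : MvPowerSeries σ L}
    (hf : MvPowerSeries.constantCoeff f = 0)
    (hg : MvPowerSeries.constantCoeff g = 0)
    {p q : ℕ} {m : σ →₀ ℕ} (h : deg m < p + q) :
    MvPowerSeries.coeff m (f ^ p * g ^ q) = 0 := by
  have := mord_mul (mord_pow (mord_one_iff.2 hf) p) (mord_pow (mord_one_iff.2 hg) q)
  exact this m h


open MvPowerSeries in
lemma coeff_subst2 (F : MvPowerSeries (Fin 2) L) (f g : MvPowerSeries σ L) (m : σ →₀ ℕ) :
    MvPowerSeries.coeff m (subst2 F f g) =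
      ∑ pq ∈ Finset.range (deg m + 1) ×ˢ Finset.range (deg m + 1),
        MvPowerSeries.coeff (Finsupp.single 0 pq.1 + Finsupp.single 1 pq.2) F *
          MvPowerSeries.coeff m (f ^ pq.1 * g ^ pq.2) := by
  rw [Finset.sum_product]
  rfl

lemma coeff_subst1 (ρ : PowerSeries L) (f : MvPowerSeries σ L) (m : σ →₀ ℕ) :
    MvPowerSeries.coeff m (subst1 ρ f) =
      ∑ p ∈ Finset.range (deg m + 1),
        PowerSeries.coeff p ρ * MvPowerSeries.coeff m (f ^ p) := rfl

lemma constantCoeff_subst1 (ρ : PowerSeries L) (f : MvPowerSeries σ L) :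
    MvPowerSeries.constantCoeff (subst1 ρ f) = PowerSeries.constantCoeff ρ := by
  rw [← MvPowerSeries.coeff_zero_eq_constantCoeff_apply, coeff_subst1]
  have h0 : deg (0 : σ →₀ ℕ) = 0 := by simp [deg]
  rw [h0]
  simp [PowerSeries.coeff_zero_eq_constantCoeff]


end Aux

noncomputable section PhiSect

open MvPowerSeries

set_option linter.unusedSectionVars false

variable {L : Type} [CommRing L] {σ : Type} {A : Type} [CommRing A] [Algebra L A]
variable [Fintype σ] [Nonempty σ] [DecidableEq σ]
variable (v : σ → A) (N : ℕ)

/-- the bound monomial -/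
def Bnd (σ : Type) [Fintype σ] (N : ℕ) : σ →₀ ℕ := Finsupp.equivFunOnFinite.symm fun _ => N

lemma Bnd_apply (s : σ) : Bnd σ N s = N := rfl

/-- product of the values -/
def vprod (m : σ →₀ ℕ) : A := m.prod fun s e => v s ^ e

lemma vprod_add (u w : σ →₀ ℕ) : vprod v (u + w) = vprod v u * vprod v w :=
  Finsupp.prod_add_index' (fun s => pow_zero (v s)) (fun s a b => pow_add (v s) a b)

lemma vprod_single (s : σ) (k : ℕ) : vprod v (Finsupp.single s k) = v s ^ k :=
  Finsupp.prod_single_index (pow_zero (v s))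

variable (hN : 2 ≤ N) (hv : ∀ m : σ →₀ ℕ, N ≤ deg m → vprod v m = 0)

include hv in
lemma vprod_eq_zero {m : σ →₀ ℕ} (h : ¬ m < Bnd σ N) : vprod v m = 0 := by
  rcases lt_or_ge (deg m) N with hd | hd
  · exfalso
    apply h
    rw [lt_iff_le_and_ne]
    constructor
    · rw [Finsupp.le_def]
      intro s
      have := le_deg m s
      rw [Bnd_apply]
      omega
    · rintro rfl
      obtain ⟨s⟩ := (inferInstance : Nonempty σ)
      have h1 := le_deg (Bnd σ N) s
      rw [Bnd_apply] at h1
      omega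
  · exact hv m hd

/-- The evaluation of a multivariate power series at the (uniformly nilpotent)
family `v`, as a bare function. -/
def PhiFun (f : MvPowerSeries σ L) : A :=
  MvPolynomial.aeval v (MvPowerSeries.trunc L (Bnd σ N) f)

lemma PhiFun_eq (f : MvPowerSeries σ L) :
    PhiFun v N f = ∑ m ∈ Finset.Iio (Bnd σ N), coeff m f • vprod v m := by
  rw [PhiFun, MvPowerSeries.trunc, MvPowerSeries.truncFinset_apply, map_sum]
  refine Finset.sum_congr rfl fun m _ => ?_
  rw [MvPolynomial.aeval_monomial, Algebra.smul_def]
  rfl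

include hv in
lemma PhiFun_eq_of_subset (f : MvPowerSeries σ L) {T : Finset (σ →₀ ℕ)}
    (hT : Finset.Iio (Bnd σ N) ⊆ T) :
    PhiFun v N f = ∑ m ∈ T, coeff m f • vprod v m := by
  rw [PhiFun_eq]
  apply Finset.sum_subset hT
  intro m _ hm
  rw [Finset.mem_Iio] at hm
  rw [vprod_eq_zero v N hv hm, smul_zero]

include hv in
lemma PhiFun_mul (f g : MvPowerSeries σ L) :
    PhiFun v N (f * g) = PhiFun v N f * PhiFun v N g := by
  rw [PhiFun_eq, PhiFun_eq, PhiFun_eq, Finset.sum_mul_sum, ← Finset.sum_product']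
  have RHS : ∀ p ∈ Finset.Iio (Bnd σ N) ×ˢ Finset.Iio (Bnd σ N),
      (coeff p.1 f • vprod v p.1) * (coeff p.2 g • vprod v p.2) =
      (coeff p.1 f * coeff p.2 g) • vprod v (p.1 + p.2) := by
    intro p _
    rw [vprod_add]
    rw [smul_mul_smul_comm]
  rw [Finset.sum_congr rfl RHS]
  have LHS : ∀ m ∈ Finset.Iio (Bnd σ N),
      coeff m (f * g) • vprod v m =
      ∑ p ∈ Finset.HasAntidiagonal.antidiagonal m, (coeff p.1 f * coeff p.2 g) • vprod v (p.1 + p.2) := by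
    intro m _
    rw [MvPowerSeries.coeff_mul, Finset.sum_smul]
    refine Finset.sum_congr rfl fun p hp => ?_
    rw [Finset.HasAntidiagonal.mem_antidiagonal] at hp
    rw [hp]
  rw [Finset.sum_congr rfl LHS, Finset.sum_sigma']
  refine Finset.sum_bij_ne_zero (fun a _ _ => (a.2.1, a.2.2)) ?_ ?_ ?_ ?_
  · rintro ⟨m, u, w⟩ h₁ h₂
    simp only [Finset.mem_sigma, Finset.mem_Iio, Finset.HasAntidiagonal.mem_antidiagonal] at h₁
    obtain ⟨hm, huw⟩ := h₁
    simp only [Finset.mem_product, Finset.mem_Iio]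
    constructor
    · exact lt_of_le_of_lt (huw ▸ self_le_add_right u w) hm
    · exact lt_of_le_of_lt (huw ▸ self_le_add_left w u) hm
  · rintro ⟨m, u, w⟩ h₁ _ ⟨m', u', w'⟩ h₂ _ heq
    simp only [Finset.mem_sigma, Finset.mem_Iio, Finset.HasAntidiagonal.mem_antidiagonal] at h₁ h₂
    simp only [Prod.mk.injEq] at heq
    obtain ⟨rfl, rfl⟩ := heq
    obtain ⟨-, rfl⟩ := h₁
    obtain ⟨-, rfl⟩ := h₂
    rfl
  · rintro ⟨u, w⟩ hb hb'
    have huw : u + w < Bnd σ N := by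
      by_contra hc
      exact hb' (by rw [vprod_eq_zero v N hv hc, smul_zero])
    refine ⟨⟨u + w, u, w⟩, ?_, ?_, rfl⟩
    · exact Finset.mem_sigma.2 ⟨Finset.mem_Iio.2 huw, Finset.HasAntidiagonal.mem_antidiagonal.2 rfl⟩
    · exact hb'
  · intros; rfl

lemma Bnd_ne_zero (hN : 2 ≤ N) : (Bnd σ N : σ →₀ ℕ) ≠ 0 := by
  obtain ⟨s⟩ := (inferInstance : Nonempty σ)
  intro h
  have := congrArg (fun m : σ →₀ ℕ => m s) h
  simp only [Bnd_apply, Finsupp.coe_zero, Pi.zero_apply] at this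
  omega

/-- The evaluation algebra homomorphism. -/
def Phi (hN : 2 ≤ N) (hv : ∀ m : σ →₀ ℕ, N ≤ deg m → vprod v m = 0) :
    MvPowerSeries σ L →ₐ[L] A where
  toFun := PhiFun v N
  map_one' := by
    simp only [PhiFun]
    have : MvPowerSeries.trunc L (Bnd σ N) (1 : MvPowerSeries σ L) = 1 :=
      MvPowerSeries.trunc_one (Bnd σ N) (Bnd_ne_zero N hN)
    rw [this, map_one]
  map_mul' := PhiFun_mul v N hv
  map_zero' := by
    simp only [PhiFun]
    have : MvPowerSeries.trunc L (Bnd σ N) (0 : MvPowerSeries σ L) = 0 :=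
      map_zero (MvPowerSeries.trunc L (Bnd σ N))
    rw [this, map_zero]
  map_add' := fun f g => by
    simp only [PhiFun]
    have : MvPowerSeries.trunc L (Bnd σ N) (f + g) =
        MvPowerSeries.trunc L (Bnd σ N) f + MvPowerSeries.trunc L (Bnd σ N) g :=
      map_add (MvPowerSeries.trunc L (Bnd σ N)) f g
    rw [this, map_add]
  commutes' := fun a => by
    have h0 : (algebraMap L (MvPowerSeries σ L)) a = MvPowerSeries.C a := rfl
    simp only [PhiFun, h0]
    have h1 : MvPowerSeries.trunc L (Bnd σ N) (MvPowerSeries.C a) =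
        MvPolynomial.C a := MvPowerSeries.trunc_C (Bnd σ N) (Bnd_ne_zero N hN) a
    rw [h1]
    simp [MvPolynomial.aeval_C]

lemma Phi_apply (hN : 2 ≤ N) (hv : ∀ m : σ →₀ ℕ, N ≤ deg m → vprod v m = 0)
    (f : MvPowerSeries σ L) : Phi v N hN hv f = PhiFun v N f := rfl

lemma single_lt_Bnd (s : σ) (k : ℕ) (hk : k < N) :
    Finsupp.single s k < Bnd σ N := by
  rw [lt_iff_le_and_ne]
  constructor
  · rw [Finsupp.le_def]
    intro x
    rw [Bnd_apply]
    rcases eq_or_ne x s with rfl | hx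
    · rw [Finsupp.single_eq_same]; omega
    · rw [Finsupp.single_eq_of_ne hx]; omega
  · intro h
    have := congrArg (fun m : σ →₀ ℕ => m s) h
    simp only [Finsupp.single_eq_same, Bnd_apply] at this
    omega

lemma Phi_X (hN : 2 ≤ N) (hv : ∀ m : σ →₀ ℕ, N ≤ deg m → vprod v m = 0) (s : σ) :
    Phi v N hN hv (MvPowerSeries.X s : MvPowerSeries σ L) = v s := by
  rw [Phi_apply, PhiFun_eq]
  rw [Finset.sum_eq_single (Finsupp.single s 1)]
  · rw [MvPowerSeries.coeff_X, if_pos rfl, vprod_single, pow_one, one_smul]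
  · intro b _ hb
    rw [MvPowerSeries.coeff_X, if_neg hb, zero_smul]
  · intro h
    exact absurd (Finset.mem_Iio.2 (single_lt_Bnd N s 1 (by omega))) h

end PhiSect

noncomputable section SubstSect

open MvPowerSeries

set_option linter.unusedSectionVars false

variable {L : Type} [CommRing L] {σ : Type} {A : Type} [CommRing A] [Algebra L A]
variable [Fintype σ] [Nonempty σ] [DecidableEq σ]
variable (v : σ → A) (N : ℕ)
variable (hN : 2 ≤ N) (hv : ∀ m : σ →₀ ℕ, N ≤ deg m → vprod v m = 0)

include hN hv in
lemma Phi_subst2 (F : MvPowerSeries (Fin 2) L) {f g : MvPowerSeries σ L}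
    (hf : MvPowerSeries.constantCoeff f = 0)
    (hg : MvPowerSeries.constantCoeff g = 0) :
    Phi v N hN hv (subst2 F f g) =
      ∑ p ∈ Finset.range N, ∑ q ∈ Finset.range N,
        MvPowerSeries.coeff (Finsupp.single 0 p + Finsupp.single 1 q) F •
          (Phi v N hN hv f ^ p * Phi v N hN hv g ^ q) := by
  rw [Phi_apply, PhiFun_eq]
  have step1 : ∀ m ∈ Finset.Iio (Bnd σ N),
      MvPowerSeries.coeff m (subst2 F f g) • vprod v m =
      ∑ pq ∈ Finset.range N ×ˢ Finset.range N,
        (MvPowerSeries.coeff (Finsupp.single 0 pq.1 + Finsupp.single 1 pq.2) F *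
          MvPowerSeries.coeff m (f ^ pq.1 * g ^ pq.2)) • vprod v m := by
    intro m _
    by_cases hdm : deg m < N
    · rw [coeff_subst2, Finset.sum_smul]
      apply Finset.sum_subset
      · intro pq hpq
        simp only [Finset.mem_product, Finset.mem_range] at *
        omega
      · intro pq hpq hnpq
        simp only [Finset.mem_product, Finset.mem_range] at hpq hnpq
        have hlt : deg m < pq.1 + pq.2 := by omega
        rw [coeff_pow_pow_eq_zero hf hg hlt, mul_zero, zero_smul]
    · push_neg at hdm
      rw [hv m hdm]
      simp
  rw [Finset.sum_congr rfl step1, Finset.sum_comm, Finset.sum_product]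
  refine Finset.sum_congr rfl fun p _ => Finset.sum_congr rfl fun q _ => ?_
  rw [← map_pow (Phi v N hN hv), ← map_pow (Phi v N hN hv), ← map_mul, Phi_apply, PhiFun_eq,
    Finset.smul_sum]
  refine Finset.sum_congr rfl fun m _ => ?_
  rw [smul_smul]

include hN hv in
lemma Phi_subst1 (ρ : PowerSeries L) {f : MvPowerSeries σ L}
    (hf : MvPowerSeries.constantCoeff f = 0) :
    Phi v N hN hv (subst1 ρ f) =
      ∑ p ∈ Finset.range N, PowerSeries.coeff p ρ • Phi v N hN hv f ^ p := by
  rw [Phi_apply, PhiFun_eq]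
  have step1 : ∀ m ∈ Finset.Iio (Bnd σ N),
      MvPowerSeries.coeff m (subst1 ρ f) • vprod v m =
      ∑ p ∈ Finset.range N,
        (PowerSeries.coeff p ρ * MvPowerSeries.coeff m (f ^ p)) • vprod v m := by
    intro m _
    by_cases hdm : deg m < N
    · rw [coeff_subst1, Finset.sum_smul]
      apply Finset.sum_subset
      · intro p hp
        simp only [Finset.mem_range] at *
        omega
      · intro p hp hnp
        simp only [Finset.mem_range] at hp hnp
        have hlt : deg m < p := by omega
        have : MvPowerSeries.coeff m (f ^ p * 1) = 0 := coeff_pow_mul_eq_zero hf hlt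
        rw [mul_one] at this
        rw [this, mul_zero, zero_smul]
    · push_neg at hdm
      rw [hv m hdm]
      simp
  rw [Finset.sum_congr rfl step1, Finset.sum_comm]
  refine Finset.sum_congr rfl fun p _ => ?_
  rw [← map_pow (Phi v N hN hv), Phi_apply, PhiFun_eq, Finset.smul_sum]
  refine Finset.sum_congr rfl fun m _ => ?_
  rw [smul_smul]

end SubstSect

noncomputable section EmbSect

open MvPowerSeries

set_option linter.unusedSectionVars false

variable {L : Type} [CommRing L] {σ : Type} [DecidableEq σ] (s₀ : σ)

/-- The embedding of one-variable power series as series in the single variable `s₀`. -/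
def emb (u : PowerSeries L) : MvPowerSeries σ L :=
  fun m => if m = Finsupp.single s₀ (m s₀) then PowerSeries.coeff (m s₀) u else 0

lemma coeff_emb (u : PowerSeries L) (m : σ →₀ ℕ) :
    MvPowerSeries.coeff m (emb s₀ u) =
      if m = Finsupp.single s₀ (m s₀) then PowerSeries.coeff (m s₀) u else 0 := rfl

lemma pcoeff_eq (d : ℕ) (x : PowerSeries L) :
    PowerSeries.coeff d x = MvPowerSeries.coeff (Finsupp.single () d) x := rfl

lemma deg_unit (m : Unit →₀ ℕ) : deg m = m () := by
  conv_lhs => rw [Finsupp.unique_single m]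
  rw [deg_single]

lemma emb_zero : emb s₀ (0 : PowerSeries L) = (0 : MvPowerSeries σ L) := by
  apply MvPowerSeries.ext; intro m
  rw [coeff_emb]
  simp

lemma emb_one : emb s₀ (1 : PowerSeries L) = (1 : MvPowerSeries σ L) := by
  apply MvPowerSeries.ext; intro m
  rw [coeff_emb, MvPowerSeries.coeff_one]
  by_cases h0 : m = 0
  · subst h0
    simp
  · rw [if_neg h0]
    by_cases hd : m = Finsupp.single s₀ (m s₀)
    · rw [if_pos hd, PowerSeries.coeff_one, if_neg]
      intro h1
      apply h0
      rw [hd, h1, Finsupp.single_zero]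
    · rw [if_neg hd]

lemma emb_X : emb s₀ (PowerSeries.X : PowerSeries L) = MvPowerSeries.X s₀ := by
  apply MvPowerSeries.ext; intro m
  rw [coeff_emb, MvPowerSeries.coeff_X]
  by_cases h1 : m = Finsupp.single s₀ 1
  · rw [if_pos h1]
    have hm : m s₀ = 1 := by rw [h1]; simp
    rw [if_pos (by rw [hm, ← h1]), hm]
    exact PowerSeries.coeff_one_X
  · rw [if_neg h1]
    by_cases hd : m = Finsupp.single s₀ (m s₀)
    · rw [if_pos hd, PowerSeries.coeff_X, if_neg]
      intro h2
      exact h1 (by rw [hd, h2])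
    · rw [if_neg hd]

lemma emb_mul (u w : PowerSeries L) :
    emb s₀ (u * w) = emb s₀ u * emb s₀ w := by
  apply MvPowerSeries.ext; intro m
  rw [MvPowerSeries.coeff_mul, coeff_emb]
  by_cases hd : m = Finsupp.single s₀ (m s₀)
  · rw [if_pos hd, PowerSeries.coeff_mul]
    symm
    refine Finset.sum_bij_ne_zero (fun a _ _ => (a.1 s₀, a.2 s₀)) ?_ ?_ ?_ ?_
    · rintro ⟨a, c⟩ h₁ h₂
      rw [Finset.HasAntidiagonal.mem_antidiagonal] at h₁
      rw [Finset.HasAntidiagonal.mem_antidiagonal]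
      have := congrArg (fun x : σ →₀ ℕ => x s₀) h₁
      simpa using this
    · rintro ⟨a, c⟩ h₁ h₁' ⟨a', c'⟩ h₂ h₂' heq
      have ha : MvPowerSeries.coeff a (emb s₀ u) ≠ 0 := fun h => h₁' (by rw [h, zero_mul])
      have hc : MvPowerSeries.coeff c (emb s₀ w) ≠ 0 := fun h => h₁' (by rw [h, mul_zero])
      have ha' : MvPowerSeries.coeff a' (emb s₀ u) ≠ 0 := fun h => h₂' (by rw [h, zero_mul])
      have hc' : MvPowerSeries.coeff c' (emb s₀ w) ≠ 0 := fun h => h₂' (by rw [h, mul_zero])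
      rw [coeff_emb] at ha hc ha' hc'
      have hda : a = Finsupp.single s₀ (a s₀) := by by_contra hx; rw [if_neg hx] at ha; exact ha rfl
      have hdc : c = Finsupp.single s₀ (c s₀) := by by_contra hx; rw [if_neg hx] at hc; exact hc rfl
      have hda' : a' = Finsupp.single s₀ (a' s₀) := by
        by_contra hx; rw [if_neg hx] at ha'; exact ha' rfl
      have hdc' : c' = Finsupp.single s₀ (c' s₀) := by
        by_contra hx; rw [if_neg hx] at hc'; exact hc' rfl
      simp only [Prod.mk.injEq] at heq
      obtain ⟨e1, e2⟩ := heq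
      have : a = a' := by rw [hda, hda', e1]
      have h2 : c = c' := by rw [hdc, hdc', e2]
      simp [this, h2]
    · rintro ⟨i, j⟩ hb hb'
      rw [Finset.HasAntidiagonal.mem_antidiagonal] at hb
      refine ⟨(Finsupp.single s₀ i, Finsupp.single s₀ j), ?_, ?_, ?_⟩
      · rw [Finset.HasAntidiagonal.mem_antidiagonal, ← Finsupp.single_add, hb, ← hd]
      · simp only [coeff_emb, Finsupp.single_eq_same]
        simpa using hb'
      · simp
    · rintro ⟨a, c⟩ h₁ h₂
      dsimp only
      have ha : MvPowerSeries.coeff a (emb s₀ u) ≠ 0 := fun h => h₂ (by rw [h, zero_mul])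
      have hc : MvPowerSeries.coeff c (emb s₀ w) ≠ 0 := fun h => h₂ (by rw [h, mul_zero])
      rw [coeff_emb] at ha hc ⊢
      have hda : a = Finsupp.single s₀ (a s₀) := by by_contra hx; rw [if_neg hx] at ha; exact ha rfl
      have hdc : c = Finsupp.single s₀ (c s₀) := by by_contra hx; rw [if_neg hx] at hc; exact hc rfl
      rw [coeff_emb, if_pos hda, if_pos hdc]
  · rw [if_neg hd]
    symm
    apply Finset.sum_eq_zero
    rintro ⟨a, c⟩ h₁
    rw [Finset.HasAntidiagonal.mem_antidiagonal] at h₁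
    by_contra h₂
    have ha : MvPowerSeries.coeff a (emb s₀ u) ≠ 0 := fun h => h₂ (by rw [h, zero_mul])
    have hc : MvPowerSeries.coeff c (emb s₀ w) ≠ 0 := fun h => h₂ (by rw [h, mul_zero])
    rw [coeff_emb] at ha hc
    have hda : a = Finsupp.single s₀ (a s₀) := by by_contra hx; rw [if_neg hx] at ha; exact ha rfl
    have hdc : c = Finsupp.single s₀ (c s₀) := by by_contra hx; rw [if_neg hx] at hc; exact hc rfl
    apply hd
    have : a + c = Finsupp.single s₀ (a s₀ + c s₀) := by rw [Finsupp.single_add]; rw [← hda, ← hdc]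
    have hms : m s₀ = a s₀ + c s₀ := by
      have := congrArg (fun x : σ →₀ ℕ => x s₀) h₁
      simpa using this.symm
    rw [← h₁, this]
    simp

lemma emb_pow (u : PowerSeries L) (p : ℕ) : emb s₀ (u ^ p) = emb s₀ u ^ p := by
  induction p with
  | zero => simpa using emb_one s₀
  | succ p ih => rw [pow_succ, pow_succ, emb_mul, ih]

lemma emb_subst2 (F : MvPowerSeries (Fin 2) L) (u w : PowerSeries L) :
    subst2 F (emb s₀ u) (emb s₀ w) = emb s₀ (subst2 F u w) := by
  apply MvPowerSeries.ext; intro m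
  rw [coeff_subst2, coeff_emb]
  by_cases hd : m = Finsupp.single s₀ (m s₀)
  · rw [if_pos hd]
    have hdm : deg m = m s₀ := by conv_lhs => rw [hd]; rw [deg_single]
    rw [pcoeff_eq, coeff_subst2, deg_unit]
    have hsm : (Finsupp.single () (m s₀)) () = m s₀ := by simp
    rw [hsm, hdm]
    refine Finset.sum_congr rfl fun pq _ => ?_
    congr 1
    rw [← emb_pow, ← emb_pow, ← emb_mul, coeff_emb, if_pos hd]
    exact pcoeff_eq _ _
  · rw [if_neg hd]
    apply Finset.sum_eq_zero
    intro pq _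
    rw [← emb_pow, ← emb_pow, ← emb_mul, coeff_emb, if_neg hd, mul_zero]

lemma subst1_X_eq_emb (ρ : PowerSeries L) :
    subst1 ρ (MvPowerSeries.X s₀ : MvPowerSeries σ L) = emb s₀ ρ := by
  apply MvPowerSeries.ext; intro m
  rw [coeff_subst1, coeff_emb]
  have hXp : ∀ p : ℕ, MvPowerSeries.coeff m ((MvPowerSeries.X s₀ : MvPowerSeries σ L) ^ p) =
      if m = Finsupp.single s₀ p then 1 else 0 := fun p => by
    rw [MvPowerSeries.X_pow_eq, MvPowerSeries.coeff_monomial]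
  by_cases hd : m = Finsupp.single s₀ (m s₀)
  · rw [if_pos hd]
    have hdm : deg m = m s₀ := by conv_lhs => rw [hd]; rw [deg_single]
    rw [Finset.sum_eq_single (m s₀)]
    · rw [hXp, if_pos hd, mul_one]
    · intro p _ hp
      rw [hXp, if_neg, mul_zero]
      intro h
      exact hp (by rw [h]; simp)
    · intro h
      exfalso
      apply h
      rw [Finset.mem_range, hdm]
      omega
  · rw [if_neg hd]
    apply Finset.sum_eq_zero
    intro p _
    rw [hXp, if_neg, mul_zero]
    intro h
    exact hd (by rw [h]; simp)

end EmbSect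

noncomputable section DiffSect

open MvPowerSeries

set_option linter.unusedSectionVars false

variable {L : Type} [CommRing L] {σ : Type}

/-- The "difference quotient" series: `(F(f,g) - F(f',g)) / (f - f')`. -/
def diffE (F : MvPowerSeries (Fin 2) L) (f f' g : MvPowerSeries σ L) : MvPowerSeries σ L :=
  fun m =>
    ∑ pq ∈ Finset.range (deg m + 2) ×ˢ Finset.range (deg m + 2),
      ∑ l ∈ Finset.range pq.1,
        MvPowerSeries.coeff (Finsupp.single 0 pq.1 + Finsupp.single 1 pq.2) F *
          MvPowerSeries.coeff m (f ^ l * f' ^ (pq.1 - 1 - l) * g ^ pq.2)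

lemma coeff_diffE (F : MvPowerSeries (Fin 2) L) (f f' g : MvPowerSeries σ L) (w : σ →₀ ℕ) :
    MvPowerSeries.coeff w (diffE F f f' g) =
    ∑ pq ∈ Finset.range (deg w + 2) ×ˢ Finset.range (deg w + 2),
      ∑ l ∈ Finset.range pq.1,
        MvPowerSeries.coeff (Finsupp.single 0 pq.1 + Finsupp.single 1 pq.2) F *
          MvPowerSeries.coeff w (f ^ l * f' ^ (pq.1 - 1 - l) * g ^ pq.2) := rfl

lemma coeff_triple_eq_zero {f f' g : MvPowerSeries σ L}
    (hf : MvPowerSeries.constantCoeff f = 0)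
    (hf' : MvPowerSeries.constantCoeff f' = 0)
    (hg : MvPowerSeries.constantCoeff g = 0)
    {p q l : ℕ} (hl : l < p) {w : σ →₀ ℕ} (hw : deg w < p - 1 + q) :
    MvPowerSeries.coeff w (f ^ l * f' ^ (p - 1 - l) * g ^ q) = 0 := by
  have h := mord_mul (mord_mul (mord_pow (mord_one_iff.2 hf) l)
    (mord_pow (mord_one_iff.2 hf') (p - 1 - l))) (mord_pow (mord_one_iff.2 hg) q)
  exact h w (by omega)

lemma constantCoeff_zero_pow_coeff {f f' : MvPowerSeries σ L}
    (hf : MvPowerSeries.constantCoeff f = 0)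
    (hf' : MvPowerSeries.constantCoeff f' = 0) :
    MvPowerSeries.coeff (0 : σ →₀ ℕ) (f - f') = 0 := by
  rw [map_sub, MvPowerSeries.coeff_zero_eq_constantCoeff_apply,
    MvPowerSeries.coeff_zero_eq_constantCoeff_apply, hf, hf', sub_zero]

lemma subst2_sub_subst2 (F : MvPowerSeries (Fin 2) L) {f f' g : MvPowerSeries σ L}
    (hf : MvPowerSeries.constantCoeff f = 0)
    (hf' : MvPowerSeries.constantCoeff f' = 0)
    (hg : MvPowerSeries.constantCoeff g = 0) :
    subst2 F f g - subst2 F f' g = (f - f') * diffE F f f' g := by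
  classical
  apply MvPowerSeries.ext; intro m
  set d := deg m with hd
  -- common form
  have hR : MvPowerSeries.coeff m ((f - f') * diffE F f f' g) =
      ∑ uw ∈ Finset.HasAntidiagonal.antidiagonal m,
        ∑ pq ∈ Finset.range (d + 2) ×ˢ Finset.range (d + 2),
          ∑ l ∈ Finset.range pq.1,
            MvPowerSeries.coeff (Finsupp.single 0 pq.1 + Finsupp.single 1 pq.2) F *
              (MvPowerSeries.coeff uw.1 (f - f') *
                MvPowerSeries.coeff uw.2 (f ^ l * f' ^ (pq.1 - 1 - l) * g ^ pq.2)) := by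
    rw [MvPowerSeries.coeff_mul]
    refine Finset.sum_congr rfl fun uw huw => ?_
    rw [Finset.HasAntidiagonal.mem_antidiagonal] at huw
    have hdw : deg uw.2 ≤ d := by
      have := deg_add uw.1 uw.2
      rw [huw] at this
      omega
    rw [coeff_diffE]
    have hext : ∑ pq ∈ Finset.range (deg uw.2 + 2) ×ˢ Finset.range (deg uw.2 + 2),
        ∑ l ∈ Finset.range pq.1,
          MvPowerSeries.coeff (Finsupp.single 0 pq.1 + Finsupp.single 1 pq.2) F *
            MvPowerSeries.coeff uw.2 (f ^ l * f' ^ (pq.1 - 1 - l) * g ^ pq.2) =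
        ∑ pq ∈ Finset.range (d + 2) ×ˢ Finset.range (d + 2),
        ∑ l ∈ Finset.range pq.1,
          MvPowerSeries.coeff (Finsupp.single 0 pq.1 + Finsupp.single 1 pq.2) F *
            MvPowerSeries.coeff uw.2 (f ^ l * f' ^ (pq.1 - 1 - l) * g ^ pq.2) := by
      apply Finset.sum_subset
      · intro pq hpq
        simp only [Finset.mem_product, Finset.mem_range] at *
        omega
      · intro pq hpq hnpq
        simp only [Finset.mem_product, Finset.mem_range] at hpq hnpq
        apply Finset.sum_eq_zero
        intro l hl
        rw [Finset.mem_range] at hl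
        rw [coeff_triple_eq_zero hf hf' hg hl (by omega), mul_zero]
    rw [hext, Finset.mul_sum]
    refine Finset.sum_congr rfl fun pq _ => ?_
    rw [Finset.mul_sum]
    refine Finset.sum_congr rfl fun l _ => ?_
    ring
  have hgeom : ∀ p q : ℕ,
      MvPowerSeries.coeff m (f ^ p * g ^ q) -
        MvPowerSeries.coeff m (f' ^ p * g ^ q) =
      ∑ l ∈ Finset.range p,
        MvPowerSeries.coeff m ((f - f') * (f ^ l * f' ^ (p - 1 - l) * g ^ q)) := by
    intro p q
    rw [← map_sub, ← sub_mul, ← geom_sum₂_mul, Finset.sum_mul, Finset.sum_mul, map_sum]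
    refine Finset.sum_congr rfl fun l _ => ?_
    congr 1
    ring
  have hL : MvPowerSeries.coeff m (subst2 F f g - subst2 F f' g) =
      ∑ uw ∈ Finset.HasAntidiagonal.antidiagonal m,
        ∑ pq ∈ Finset.range (d + 2) ×ˢ Finset.range (d + 2),
          ∑ l ∈ Finset.range pq.1,
            MvPowerSeries.coeff (Finsupp.single 0 pq.1 + Finsupp.single 1 pq.2) F *
              (MvPowerSeries.coeff uw.1 (f - f') *
                MvPowerSeries.coeff uw.2 (f ^ l * f' ^ (pq.1 - 1 - l) * g ^ pq.2)) := by
    rw [map_sub, coeff_subst2, coeff_subst2, ← Finset.sum_sub_distrib]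
    have step1 : ∀ pq ∈ Finset.range (d + 1) ×ˢ Finset.range (d + 1),
        (MvPowerSeries.coeff (Finsupp.single 0 pq.1 + Finsupp.single 1 pq.2) F *
            MvPowerSeries.coeff m (f ^ pq.1 * g ^ pq.2) -
         MvPowerSeries.coeff (Finsupp.single 0 pq.1 + Finsupp.single 1 pq.2) F *
            MvPowerSeries.coeff m (f' ^ pq.1 * g ^ pq.2)) =
        ∑ uw ∈ Finset.HasAntidiagonal.antidiagonal m,
          ∑ l ∈ Finset.range pq.1,
            MvPowerSeries.coeff (Finsupp.single 0 pq.1 + Finsupp.single 1 pq.2) F *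
              (MvPowerSeries.coeff uw.1 (f - f') *
                MvPowerSeries.coeff uw.2 (f ^ l * f' ^ (pq.1 - 1 - l) * g ^ pq.2)) := by
      intro pq _
      rw [← mul_sub, hgeom, Finset.mul_sum]
      have inner : ∀ l ∈ Finset.range pq.1,
          MvPowerSeries.coeff (Finsupp.single 0 pq.1 + Finsupp.single 1 pq.2) F *
            MvPowerSeries.coeff m ((f - f') * (f ^ l * f' ^ (pq.1 - 1 - l) * g ^ pq.2)) =
          ∑ uw ∈ Finset.HasAntidiagonal.antidiagonal m,
            MvPowerSeries.coeff (Finsupp.single 0 pq.1 + Finsupp.single 1 pq.2) F *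
              (MvPowerSeries.coeff uw.1 (f - f') *
                MvPowerSeries.coeff uw.2 (f ^ l * f' ^ (pq.1 - 1 - l) * g ^ pq.2)) := by
        intro l _
        rw [MvPowerSeries.coeff_mul, Finset.mul_sum]
      rw [Finset.sum_congr rfl inner]
      exact Finset.sum_comm
    rw [Finset.sum_congr rfl step1, Finset.sum_comm]
    refine Finset.sum_congr rfl fun uw huw => ?_
    rw [Finset.HasAntidiagonal.mem_antidiagonal] at huw
    have hdsum : deg uw.1 + deg uw.2 = d := by
      have := deg_add uw.1 uw.2
      rw [huw] at this
      omega
    apply Finset.sum_subset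
    · intro pq hpq
      simp only [Finset.mem_product, Finset.mem_range] at *
      omega
    · intro pq hpq hnpq
      simp only [Finset.mem_product, Finset.mem_range] at hpq hnpq
      apply Finset.sum_eq_zero
      intro l hl
      rw [Finset.mem_range] at hl
      by_cases hvan : deg uw.2 < pq.1 - 1 + pq.2
      · rw [coeff_triple_eq_zero hf hf' hg hl hvan, mul_zero, mul_zero]
      · have hu0 : uw.1 = 0 := by
          apply deg_eq_zero
          omega
        rw [hu0, constantCoeff_zero_pow_coeff hf hf', zero_mul, mul_zero]
  rw [hL, hR]

end DiffSect

noncomputable section MoreAux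

open MvPowerSeries

set_option linter.unusedSectionVars false

variable {L : Type} [CommRing L] {σ : Type}

lemma deg_zero' : deg (0 : σ →₀ ℕ) = 0 := by simp [deg]

lemma constantCoeff_diffE (F : MvPowerSeries (Fin 2) L) {f f' g : MvPowerSeries σ L}
    (hg : MvPowerSeries.constantCoeff g = 0) :
    MvPowerSeries.constantCoeff (diffE F f f' g) =
      MvPowerSeries.coeff (Finsupp.single 0 1 + Finsupp.single 1 0) F := by
  rw [← MvPowerSeries.coeff_zero_eq_constantCoeff_apply, coeff_diffE, deg_zero']
  rw [Finset.sum_product]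
  simp only [Finset.sum_range_succ, Finset.sum_range_zero]
  simp only [pow_zero, pow_one, mul_one, one_mul, zero_add, Nat.sub_self, Nat.zero_sub]
  rw [MvPowerSeries.coeff_zero_eq_constantCoeff_apply,
    MvPowerSeries.coeff_zero_eq_constantCoeff_apply]
  simp [hg]

lemma pX_eq : (PowerSeries.X : PowerSeries L) = MvPowerSeries.X () := rfl

lemma coeff_one_subst2_X0 (F : MvPowerSeries (Fin 2) L) :
    PowerSeries.coeff 1 (subst2 F (PowerSeries.X : PowerSeries L) 0) =
      MvPowerSeries.coeff (Finsupp.single 0 1 + Finsupp.single 1 0) F := by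
  rw [pcoeff_eq, coeff_subst2, deg_single, Finset.sum_product]
  simp only [Finset.sum_range_succ, Finset.sum_range_zero]
  simp only [pow_zero, pow_one, mul_one, one_mul, zero_add, mul_zero, map_zero]
  rw [pX_eq]
  simp [MvPowerSeries.coeff_one, MvPowerSeries.coeff_X, Finsupp.single_eq_zero]

/-- sum over `Iio (Bnd Unit N)` equals a range sum -/
lemma unit_sum {A : Type} [AddCommMonoid A] (N : ℕ) (G : (Unit →₀ ℕ) → A) :
    ∑ m ∈ Finset.Iio (Bnd Unit N), G m = ∑ p ∈ Finset.range N, G (Finsupp.single () p) := by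
  have hB : (Bnd Unit N : Unit →₀ ℕ) = Finsupp.single () N := by
    conv_lhs => rw [Finsupp.unique_single (Bnd Unit N)]
    rw [Bnd_apply]
  have hmem : ∀ m : Unit →₀ ℕ, m ∈ Finset.Iio (Bnd Unit N) ↔ m () < N := by
    intro m
    rw [Finset.mem_Iio]
    constructor
    · intro h
      rcases lt_or_ge (m ()) N with h1 | h1
      · exact h1
      · exfalso
        have h2 : m ≤ Bnd Unit N := le_of_lt h
        rw [Finsupp.le_def] at h2
        have h3 := h2 ()
        rw [hB] at h3
        simp only [Finsupp.single_eq_same] at h3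
        have hmB : m = Bnd Unit N := by
          rw [hB]
          have hu := Finsupp.unique_single m
          rw [hu]
          congr 1
          show m () = N
          omega
        exact (ne_of_lt h) hmB
    · intro h
      have hm : m = Finsupp.single () (m ()) := Finsupp.unique_single m
      rw [hm, hB, lt_iff_le_and_ne]
      constructor
      · rw [Finsupp.le_def]
        intro s
        simp only [Finsupp.single_apply]
        split_ifs <;> omega
      · intro hcon
        have := congrArg (fun x : Unit →₀ ℕ => x ()) hcon
        simp only [Finsupp.single_eq_same] at this
        omega
  refine Finset.sum_nbij' (fun m => m ()) (fun p => Finsupp.single () p) ?_ ?_ ?_ ?_ ?_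
  · intro m hm
    rw [Finset.mem_range]
    exact (hmem m).1 hm
  · intro p hp
    rw [Finset.mem_range] at hp
    apply (hmem _).2
    simpa using hp
  · intro m hm
    exact (Finsupp.unique_single m).symm
  · intro p hp
    simp
  · intro m hm
    rw [← Finsupp.unique_single m]

/-- decomposition: a series of order `≥ k` lies in `M^k` where `M` is the ideal generated by
the variables. -/
lemma mem_pow_span_X [Fintype σ] [LinearOrder σ] :
    ∀ (k : ℕ) (f : MvPowerSeries σ L),
    (∀ m : σ →₀ ℕ, deg m < k → MvPowerSeries.coeff m f = 0) →
    f ∈ (Ideal.span (Set.range (MvPowerSeries.X : σ → MvPowerSeries σ L))) ^ k := by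
  intro k
  induction k with
  | zero => intro f _; rw [pow_zero, Ideal.one_eq_top]; exact Submodule.mem_top
  | succ k ih =>
    intro f hf
    classical
    set g : σ → MvPowerSeries σ L := fun i => fun m' =>
      if (m' + Finsupp.single i 1).support.min = (i : WithBot σ) then
        MvPowerSeries.coeff (m' + Finsupp.single i 1) f
      else 0 with hg
    have hcoeffg : ∀ (i : σ) (m' : σ →₀ ℕ), MvPowerSeries.coeff m' (g i) =
        if (m' + Finsupp.single i 1).support.min = (i : WithBot σ) then
          MvPowerSeries.coeff (m' + Finsupp.single i 1) f
        else 0 := fun i m' => rfl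
    have hXmul : ∀ (i : σ) (m : σ →₀ ℕ), MvPowerSeries.coeff m (MvPowerSeries.X i * g i) =
        if Finsupp.single i 1 ≤ m then MvPowerSeries.coeff (m - Finsupp.single i 1) (g i)
        else 0 := by
      intro i m
      rw [MvPowerSeries.X_def, MvPowerSeries.coeff_monomial_mul]
      split_ifs <;> simp
    have hsub : ∀ (i : σ) (m : σ →₀ ℕ), Finsupp.single i 1 ≤ m →
        m - Finsupp.single i 1 + Finsupp.single i 1 = m := by
      intro i m hle
      have hmi : 1 ≤ m i := Finsupp.single_le_iff.1 hle
      ext s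
      simp only [Finsupp.add_apply, Finsupp.tsub_apply, Finsupp.single_apply]
      split_ifs with hs
      · subst hs; omega
      · omega
    have hdecomp : f = ∑ i : σ, MvPowerSeries.X i * g i := by
      apply MvPowerSeries.ext; intro m
      rw [map_sum]
      by_cases hm : m = 0
      · subst hm
        rw [hf 0 (by rw [deg_zero']; omega)]
        symm
        apply Finset.sum_eq_zero
        intro i _
        rw [hXmul, if_neg]
        intro hle
        have := Finsupp.single_le_iff.1 hle
        simp at this
      · have hsupp : m.support.Nonempty := Finsupp.support_nonempty_iff.2 hm
        set i₀ := m.support.min' hsupp with hi₀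
        have hmin : m.support.min = (i₀ : WithBot σ) := (Finset.coe_min' hsupp).symm
        have hi₀mem : i₀ ∈ m.support := Finset.min'_mem _ _
        have hmi₀ : m i₀ ≠ 0 := Finsupp.mem_support_iff.1 hi₀mem
        have hle₀ : Finsupp.single i₀ 1 ≤ m := Finsupp.single_le_iff.2 (by omega)
        rw [Finset.sum_eq_single i₀]
        · rw [hXmul, if_pos hle₀, hcoeffg, hsub i₀ m hle₀]
          split_ifs with hc
          · rfl
          · exact absurd hmin hc
        · intro i _ hi
          rw [hXmul]
          by_cases hle : Finsupp.single i 1 ≤ m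
          · rw [if_pos hle, hcoeffg, hsub i m hle, if_neg]
            intro hcon
            rw [hmin] at hcon
            exact hi (WithBot.coe_inj.1 hcon).symm
          · rw [if_neg hle]
        · intro habs
          exact absurd (Finset.mem_univ i₀) habs
    have hgord : ∀ i : σ, ∀ m' : σ →₀ ℕ, deg m' < k → MvPowerSeries.coeff m' (g i) = 0 := by
      intro i m' hm'
      rw [hcoeffg]
      split_ifs with hcon
      · apply hf
        rw [deg_add, deg_single]
        omega
      · rfl
    rw [hdecomp, pow_succ]
    apply Ideal.sum_mem
    intro i _
    have h1 := ih (g i) (hgord i)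
    have h2 : MvPowerSeries.X i ∈
        Ideal.span (Set.range (MvPowerSeries.X : σ → MvPowerSeries σ L)) :=
      Ideal.subset_span (Set.mem_range_self i)
    have h3 := Ideal.mul_mem_mul h2 h1
    rwa [mul_comm (Ideal.span (Set.range (MvPowerSeries.X : σ → MvPowerSeries σ L)))] at h3


lemma vprod_const {A : Type} [CommRing A] (t : A) (m : σ →₀ ℕ) :
    vprod (fun _ : σ => t) m = t ^ deg m := by
  rw [vprod, deg, Finsupp.prod, Finsupp.sum, Finset.prod_pow_eq_pow_sum]

lemma lt_Bnd_of_deg_lt [Fintype σ] [Nonempty σ] [DecidableEq σ] {N : ℕ} {m : σ →₀ ℕ} (h : deg m < N) :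
    m < Bnd σ N := by
  rw [lt_iff_le_and_ne]
  constructor
  · rw [Finsupp.le_def]
    intro s
    have := le_deg m s
    rw [Bnd_apply]
    omega
  · rintro rfl
    obtain ⟨s⟩ := (inferInstance : Nonempty σ)
    have h1 := le_deg (Bnd σ N) s
    rw [Bnd_apply] at h1
    omega

end MoreAux

/-- Let `F` be a one-dimensional commutative formal group law over `L` with formal
inverse `ρ`, and `n ≥ 1`.  In `L[[t_1,...,t_{n+1}]]`, let `J` be the ideal generated by
the product `t_1 ⋯ t_{n+1}` together with the formal differences `t_i −_F t_{n+1}`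
for `1 ≤ i ≤ n`.  Then `L[[t_1,...,t_{n+1}]]/J ≅ L[t]/(t^{n+1})` as `L`-algebras,
the isomorphism sending the class of `t_{n+1}` to the class of `t`.
(This computes the algebraic cobordism ring `Ω^*(Pⁿ) ≅ 𝕃[t]/(t^{n+1})`.) -/
theorem stmt_12 (L : Type) [CommRing L] (n : ℕ) (hn : 1 ≤ n)
    (F : MvPowerSeries (Fin 2) L) (hF : IsFormalGroupLaw F)
    (ρ : PowerSeries L) (hρ0 : PowerSeries.constantCoeff ρ = 0)
    (hρ : subst2 F (PowerSeries.X : PowerSeries L) ρ = 0)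
    (J : Ideal (MvPowerSeries (Fin (n + 1)) L))
    (hJ : J = Ideal.span
      ({∏ i : Fin (n + 1), (MvPowerSeries.X i : MvPowerSeries (Fin (n + 1)) L)} ∪
        Set.range (fun i : Fin n =>
          subst2 F (MvPowerSeries.X (i.castSucc : Fin (n + 1)))
            (subst1 ρ (MvPowerSeries.X (Fin.last n)))))) :
    ∃ e : (MvPowerSeries (Fin (n + 1)) L ⧸ J) ≃ₐ[L]
        (Polynomial L ⧸ Ideal.span {(Polynomial.X : Polynomial L) ^ (n + 1)}),
      e (Ideal.Quotient.mk J (MvPowerSeries.X (Fin.last n))) =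
        Ideal.Quotient.mk (Ideal.span {(Polynomial.X : Polynomial L) ^ (n + 1)})
          Polynomial.X := by
  classical
  have hN : 2 ≤ n + 1 := by omega
  set I : Ideal (Polynomial L) := Ideal.span {(Polynomial.X : Polynomial L) ^ (n + 1)} with hIdef
  set τ : Polynomial L ⧸ I := Ideal.Quotient.mk I Polynomial.X with hτdef
  have hτpow : τ ^ (n + 1) = 0 := by
    rw [hτdef, ← map_pow, Ideal.Quotient.eq_zero_iff_mem]
    exact Ideal.subset_span rfl
  have hτk : ∀ k, n + 1 ≤ k → τ ^ k = 0 := by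
    intro k hk
    have h1 : τ ^ k = τ ^ (n + 1) * τ ^ (k - (n + 1)) := by
      rw [← pow_add]
      congr 1
      omega
    rw [h1, hτpow, zero_mul]
  have hv : ∀ m : Fin (n + 1) →₀ ℕ, n + 1 ≤ deg m →
      vprod (fun _ : Fin (n + 1) => τ) m = 0 := fun m hm => by
    rw [vprod_const]; exact hτk _ hm
  have hv' : ∀ m : Unit →₀ ℕ, n + 1 ≤ deg m →
      vprod (fun _ : Unit => τ) m = 0 := fun m hm => by
    rw [vprod_const]; exact hτk _ hm
  have hX0 : ∀ j : Fin (n + 1),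
      MvPowerSeries.constantCoeff (MvPowerSeries.X j : MvPowerSeries (Fin (n + 1)) L) = 0 :=
    fun j => MvPowerSeries.constantCoeff_X j
  have hb0 : MvPowerSeries.constantCoeff
      (subst1 ρ (MvPowerSeries.X (Fin.last n))) = 0 := by
    rw [constantCoeff_subst1]; exact hρ0
  have hρ0' : MvPowerSeries.constantCoeff (ρ : MvPowerSeries Unit L) = 0 := hρ0
  have hφX : ∀ j : Fin (n + 1),
      Phi (fun _ : Fin (n + 1) => τ) (n + 1) hN hv
        (MvPowerSeries.X j : MvPowerSeries (Fin (n + 1)) L) = τ :=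
    fun j => Phi_X _ _ hN hv j
  have hevX : Phi (fun _ : Unit => τ) (n + 1) hN hv'
      (PowerSeries.X : PowerSeries L) = τ := by
    rw [pX_eq]; exact Phi_X _ _ hN hv' ()
  have hφb : Phi (fun _ : Fin (n + 1) => τ) (n + 1) hN hv
      (subst1 ρ (MvPowerSeries.X (Fin.last n) : MvPowerSeries (Fin (n + 1)) L)) =
      ∑ p ∈ Finset.range (n + 1), PowerSeries.coeff p ρ • τ ^ p := by
    rw [Phi_subst1 _ _ hN hv ρ (hX0 (Fin.last n))]
    refine Finset.sum_congr rfl fun p _ => ?_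
    rw [hφX]
  have hevρ : Phi (fun _ : Unit => τ) (n + 1) hN hv' (ρ : MvPowerSeries Unit L) =
      ∑ p ∈ Finset.range (n + 1), PowerSeries.coeff p ρ • τ ^ p := by
    rw [Phi_apply, PhiFun_eq, unit_sum]
    refine Finset.sum_congr rfl fun p _ => ?_
    rw [vprod_single, ← pcoeff_eq]
  have hpsX0 : MvPowerSeries.constantCoeff (PowerSeries.X : PowerSeries L) = 0 := by
    rw [pX_eq]; exact MvPowerSeries.constantCoeff_X ()
  -- the fundamental vanishing sum
  have key0 : ∑ p ∈ Finset.range (n + 1), ∑ q ∈ Finset.range (n + 1),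
      MvPowerSeries.coeff (Finsupp.single 0 p + Finsupp.single 1 q) F •
        (τ ^ p * (∑ p' ∈ Finset.range (n + 1), PowerSeries.coeff p' ρ • τ ^ p') ^ q)
      = 0 := by
    have h1 := Phi_subst2 (fun _ : Unit => τ) (n + 1) hN hv' F hpsX0 hρ0'
    rw [hρ, map_zero, hevX, hevρ] at h1
    exact h1.symm
  -- generators die under Φ
  have hgen0 : ∀ i : Fin n,
      Phi (fun _ : Fin (n + 1) => τ) (n + 1) hN hv
        (subst2 F (MvPowerSeries.X (i.castSucc : Fin (n + 1)) : MvPowerSeries (Fin (n + 1)) L)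
          (subst1 ρ (MvPowerSeries.X (Fin.last n)))) = 0 := by
    intro i
    rw [Phi_subst2 _ _ hN hv F (hX0 _) hb0, hφX, hφb]
    exact key0
  have hprod0 : Phi (fun _ : Fin (n + 1) => τ) (n + 1) hN hv
      (∏ i : Fin (n + 1), (MvPowerSeries.X i : MvPowerSeries (Fin (n + 1)) L)) = 0 := by
    rw [map_prod]
    have : ∀ j ∈ Finset.univ, Phi (fun _ : Fin (n + 1) => τ) (n + 1) hN hv
        (MvPowerSeries.X j) = τ := fun j _ => hφX j
    rw [Finset.prod_congr rfl this, Finset.prod_const, Finset.card_univ, Fintype.card_fin]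
    exact hτpow
  have hker : ∀ a ∈ J, Phi (fun _ : Fin (n + 1) => τ) (n + 1) hN hv a = 0 := by
    have hle : J ≤ RingHom.ker (Phi (fun _ : Fin (n + 1) => τ) (n + 1) hN hv).toRingHom := by
      rw [hJ]
      apply Ideal.span_le.2
      rintro x (rfl | ⟨i, rfl⟩)
      · exact RingHom.mem_ker.2 hprod0
      · exact RingHom.mem_ker.2 (hgen0 i)
    intro a ha
    exact RingHom.mem_ker.1 (hle ha)
  -- Claim A : X i - X last ∈ J
  have claimA : ∀ i : Fin n,
      (MvPowerSeries.X (i.castSucc : Fin (n + 1)) : MvPowerSeries (Fin (n + 1)) L) -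
        MvPowerSeries.X (Fin.last n) ∈ J := by
    intro i
    have hgenJ : subst2 F (MvPowerSeries.X (i.castSucc : Fin (n + 1)))
        (subst1 ρ (MvPowerSeries.X (Fin.last n))) ∈ J := by
      rw [hJ]
      exact Ideal.subset_span (Set.mem_union_right _ ⟨i, rfl⟩)
    have hzero : subst2 F (MvPowerSeries.X (Fin.last n) : MvPowerSeries (Fin (n + 1)) L)
        (subst1 ρ (MvPowerSeries.X (Fin.last n))) = 0 := by
      rw [subst1_X_eq_emb, ← emb_X (Fin.last n), emb_subst2, hρ, emb_zero]
    have hdiff := subst2_sub_subst2 F (hX0 (i.castSucc : Fin (n + 1))) (hX0 (Fin.last n)) hb0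
    rw [hzero, sub_zero] at hdiff
    have hE1 : MvPowerSeries.constantCoeff
        (diffE F (MvPowerSeries.X (i.castSucc : Fin (n + 1))) (MvPowerSeries.X (Fin.last n))
          (subst1 ρ (MvPowerSeries.X (Fin.last n)))) = 1 := by
      rw [constantCoeff_diffE F hb0, ← coeff_one_subst2_X0 F, hF.zero_right]
      exact PowerSeries.coeff_one_X
    have hunit := MvPowerSeries.mul_invOfUnit
      (diffE F (MvPowerSeries.X (i.castSucc : Fin (n + 1))) (MvPowerSeries.X (Fin.last n))
        (subst1 ρ (MvPowerSeries.X (Fin.last n)))) (1 : Lˣ) (by rw [hE1]; rfl)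
    have heq : (MvPowerSeries.X (i.castSucc : Fin (n + 1)) : MvPowerSeries (Fin (n + 1)) L) -
        MvPowerSeries.X (Fin.last n) =
        (subst2 F (MvPowerSeries.X (i.castSucc : Fin (n + 1)))
          (subst1 ρ (MvPowerSeries.X (Fin.last n)))) *
          MvPowerSeries.invOfUnit
            (diffE F (MvPowerSeries.X (i.castSucc : Fin (n + 1)))
              (MvPowerSeries.X (Fin.last n))
              (subst1 ρ (MvPowerSeries.X (Fin.last n)))) 1 := by
      rw [hdiff, mul_assoc, hunit, mul_one]
    rw [heq]
    exact Ideal.mul_mem_right _ _ hgenJ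
  have hq : ∀ j : Fin (n + 1),
      Ideal.Quotient.mk J (MvPowerSeries.X j) =
        Ideal.Quotient.mk J (MvPowerSeries.X (Fin.last n)) := by
    intro j
    refine Fin.lastCases ?_ ?_ j
    · rfl
    · intro i
      exact (Ideal.Quotient.mk_eq_mk_iff_sub_mem _ _).2 (claimA i)
  have hprodJ : (∏ i : Fin (n + 1), (MvPowerSeries.X i : MvPowerSeries (Fin (n + 1)) L)) ∈ J := by
    rw [hJ]
    exact Ideal.subset_span (Set.mem_union_left _ rfl)
  have hlastpow : (Ideal.Quotient.mk J (MvPowerSeries.X (Fin.last n))) ^ (n + 1) = 0 := by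
    have h1 : Ideal.Quotient.mk J (∏ i : Fin (n + 1),
        (MvPowerSeries.X i : MvPowerSeries (Fin (n + 1)) L)) = 0 :=
      Ideal.Quotient.eq_zero_iff_mem.2 hprodJ
    rw [map_prod, Finset.prod_congr rfl (fun j _ => hq j), Finset.prod_const,
      Finset.card_univ, Fintype.card_fin] at h1
    exact h1
  have hMJ : (Ideal.span (Set.range
      (MvPowerSeries.X : Fin (n + 1) → MvPowerSeries (Fin (n + 1)) L))) ^ (n + 1) ≤ J := by
    intro x hx
    have h1 : Ideal.Quotient.mk J x ∈ Ideal.map (Ideal.Quotient.mk J)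
        ((Ideal.span (Set.range
          (MvPowerSeries.X : Fin (n + 1) → MvPowerSeries (Fin (n + 1)) L))) ^ (n + 1)) :=
      Ideal.mem_map_of_mem _ hx
    rw [Ideal.map_pow] at h1
    have h2 : Ideal.map (Ideal.Quotient.mk J) (Ideal.span (Set.range
        (MvPowerSeries.X : Fin (n + 1) → MvPowerSeries (Fin (n + 1)) L))) ≤
        Ideal.span {Ideal.Quotient.mk J (MvPowerSeries.X (Fin.last n))} := by
      rw [Ideal.map_span]
      apply Ideal.span_le.2
      rintro y ⟨x', ⟨j, rfl⟩, rfl⟩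
      rw [hq j]
      exact Ideal.mem_span_singleton_self _
    have h4 := Ideal.pow_right_mono h2 (n + 1) h1
    rw [Ideal.span_singleton_pow, hlastpow, Ideal.span_singleton_eq_bot.2 rfl,
      Ideal.mem_bot] at h4
    exact Ideal.Quotient.eq_zero_iff_mem.1 h4
  have hKJ : ∀ f : MvPowerSeries (Fin (n + 1)) L,
      (∀ m : Fin (n + 1) →₀ ℕ, deg m < n + 1 → MvPowerSeries.coeff m f = 0) → f ∈ J :=
    fun f hf => hMJ (mem_pow_span_X (n + 1) f hf)
  -- kernel of Φ is contained in J
  have hker2 : ∀ f : MvPowerSeries (Fin (n + 1)) L,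
      Phi (fun _ : Fin (n + 1) => τ) (n + 1) hN hv f = 0 → f ∈ J := by
    intro f hf0
    have hsplit : f - ((MvPowerSeries.trunc L (Bnd (Fin (n + 1)) (n + 1)) f :
        MvPolynomial (Fin (n + 1)) L) : MvPowerSeries (Fin (n + 1)) L) ∈ J := by
      apply hKJ
      intro m hm
      rw [map_sub, MvPolynomial.coeff_coe, MvPowerSeries.coeff_trunc,
        if_pos (lt_Bnd_of_deg_lt hm), sub_self]
    have hAe : Polynomial.aeval τ (MvPolynomial.aeval
        (fun _ : Fin (n + 1) => (Polynomial.X : Polynomial L))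
        (MvPowerSeries.trunc L (Bnd (Fin (n + 1)) (n + 1)) f)) = 0 := by
      have hcomp : (Polynomial.aeval τ).comp
          (MvPolynomial.aeval (fun _ : Fin (n + 1) => (Polynomial.X : Polynomial L))) =
          MvPolynomial.aeval (fun _ : Fin (n + 1) => τ) := by
        apply MvPolynomial.algHom_ext
        intro i
        simp
      have h5 := congrArg (fun (ψ : MvPolynomial (Fin (n + 1)) L →ₐ[L] Polynomial L ⧸ I) =>
        ψ (MvPowerSeries.trunc L (Bnd (Fin (n + 1)) (n + 1)) f)) hcomp
      simp only [AlgHom.comp_apply] at h5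
      rw [h5]
      exact hf0
    have hmk : Ideal.Quotient.mk I (MvPolynomial.aeval
        (fun _ : Fin (n + 1) => (Polynomial.X : Polynomial L))
        (MvPowerSeries.trunc L (Bnd (Fin (n + 1)) (n + 1)) f)) = 0 := by
      have hcomp2 : (Ideal.Quotient.mkₐ L I) =
          (Polynomial.aeval τ : Polynomial L →ₐ[L] Polynomial L ⧸ I) := by
        apply Polynomial.algHom_ext
        simp [hτdef]
      have h6 := congrArg (fun (ψ : Polynomial L →ₐ[L] Polynomial L ⧸ I) =>
        ψ (MvPolynomial.aeval (fun _ : Fin (n + 1) => (Polynomial.X : Polynomial L))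
          (MvPowerSeries.trunc L (Bnd (Fin (n + 1)) (n + 1)) f))) hcomp2
      simp only [Ideal.Quotient.mkₐ_eq_mk] at h6
      rw [h6, hAe]
    obtain ⟨s, hs⟩ := Ideal.mem_span_singleton'.1
      (hIdef ▸ (Ideal.Quotient.eq_zero_iff_mem.1 hmk))
    have hcoe : ∀ p : MvPolynomial (Fin (n + 1)) L,
        (MvPolynomial.coeToMvPowerSeries.algHom L p : MvPowerSeries (Fin (n + 1)) L) =
          (p : MvPowerSeries (Fin (n + 1)) L) := by
      intro p
      rw [MvPolynomial.coeToMvPowerSeries.algHom_apply]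
      have : algebraMap L L = RingHom.id L := rfl
      rw [this, MvPowerSeries.map_id]
      rfl
    have hcomp3 : (Ideal.Quotient.mkₐ L J).comp
        (MvPolynomial.coeToMvPowerSeries.algHom L) =
        (Polynomial.aeval (Ideal.Quotient.mk J (MvPowerSeries.X (Fin.last n)))).comp
          (MvPolynomial.aeval (fun _ : Fin (n + 1) => (Polynomial.X : Polynomial L))) := by
      apply MvPolynomial.algHom_ext
      intro i
      simp only [AlgHom.comp_apply, MvPolynomial.aeval_X, Polynomial.aeval_X,
        Ideal.Quotient.mkₐ_eq_mk]
      rw [hcoe, MvPolynomial.coe_X, hq i]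
    have hQJ : ((MvPowerSeries.trunc L (Bnd (Fin (n + 1)) (n + 1)) f :
        MvPolynomial (Fin (n + 1)) L) : MvPowerSeries (Fin (n + 1)) L) ∈ J := by
      rw [← Ideal.Quotient.eq_zero_iff_mem]
      have h7 := congrArg (fun (ψ : MvPolynomial (Fin (n + 1)) L →ₐ[L]
        MvPowerSeries (Fin (n + 1)) L ⧸ J) =>
        ψ (MvPowerSeries.trunc L (Bnd (Fin (n + 1)) (n + 1)) f)) hcomp3
      simp only [AlgHom.comp_apply, Ideal.Quotient.mkₐ_eq_mk] at h7
      rw [hcoe] at h7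
      rw [h7, ← hs, map_mul, map_pow, Polynomial.aeval_X, hlastpow, mul_zero]
    have := Ideal.add_mem J hsplit hQJ
    simpa using this
  -- surjectivity
  have hsurj : Function.Surjective ⇑(Phi (fun _ : Fin (n + 1) => τ) (n + 1) hN hv :
      MvPowerSeries (Fin (n + 1)) L →ₐ[L] Polynomial L ⧸ I) := by
    intro a
    obtain ⟨p, rfl⟩ := Ideal.Quotient.mk_surjective a
    have hcomp4 : (Phi (fun _ : Fin (n + 1) => τ) (n + 1) hN hv).comp
        (Polynomial.aeval (MvPowerSeries.X (Fin.last n) :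
          MvPowerSeries (Fin (n + 1)) L) : Polynomial L →ₐ[L] MvPowerSeries (Fin (n + 1)) L) =
        Ideal.Quotient.mkₐ L I := by
      apply Polynomial.algHom_ext
      simp only [AlgHom.comp_apply, Polynomial.aeval_X, Ideal.Quotient.mkₐ_eq_mk]
      rw [hφX]
    refine ⟨Polynomial.aeval (MvPowerSeries.X (Fin.last n) :
      MvPowerSeries (Fin (n + 1)) L) p, ?_⟩
    have h8 := congrArg (fun (ψ : Polynomial L →ₐ[L] Polynomial L ⧸ I) => ψ p) hcomp4
    simp only [AlgHom.comp_apply, Ideal.Quotient.mkₐ_eq_mk] at h8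
    exact h8
  -- assemble
  refine ⟨AlgEquiv.ofBijective (Ideal.Quotient.liftₐ J
    (Phi (fun _ : Fin (n + 1) => τ) (n + 1) hN hv) hker) ⟨?_, ?_⟩, ?_⟩
  · rw [injective_iff_map_eq_zero]
    intro x hx
    obtain ⟨f, rfl⟩ := Ideal.Quotient.mk_surjective x
    rw [Ideal.Quotient.liftₐ_apply] at hx
    rw [Ideal.Quotient.eq_zero_iff_mem]
    exact hker2 f hx
  · intro a
    obtain ⟨f, hf⟩ := hsurj a
    refine ⟨Ideal.Quotient.mk J f, ?_⟩
    rw [Ideal.Quotient.liftₐ_apply]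
    exact hf
  · show Ideal.Quotient.liftₐ J (Phi (fun _ : Fin (n + 1) => τ) (n + 1) hN hv) hker
      (Ideal.Quotient.mk J (MvPowerSeries.X (Fin.last n))) = τ
    rw [Ideal.Quotient.liftₐ_apply]
    exact hφX (Fin.last n)
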